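/- arXiv:2406.17058 — 4 statements merged into one kernel-verified Lean document; each statement's English description precedes it below -/
import Mathlib

section
/- Let (e_k)_{k ≥ 1} be a sequence of independent random variables on a probability space, each exponentially distributed with rate 1. Then the random series J* = (2/π²) Σ_{k=1}^∞ e_k/(k − 1/2)² converges almost surely, and for every t ≥ 0 its Laplace transform satisfies E[exp(−t J*)] = 1/cosh(√(2t)). -/
open MeasureTheory ProbabilityTheory Real Filter Set Topology
open scoped ENNReal NNReal

lemma sinh_prod_tendsto (x : ℝ) :
    Tendsto (fun n : ℕ => x * ∏ j ∈ Finset.range n, (1 + x ^ 2 / (π ^ 2 * ((j : ℝ) + 1) ^ 2)))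
      atTop (𝓝 (Real.sinh x)) := by
  have h := Complex.tendsto_euler_sin_prod ((x / π : ℝ) * Complex.I)
  have hπ : (π : ℝ) ≠ 0 := Real.pi_ne_zero
  have hxi : (π : ℂ) * ((x / π : ℝ) * Complex.I) = (x : ℂ) * Complex.I := by
    rw [← mul_assoc, ← Complex.ofReal_mul, mul_div_cancel₀ _ hπ]
  have hfac : ∀ j : ℕ, ((1 : ℂ) - ((x / π : ℝ) * Complex.I) ^ 2 / ((j : ℂ) + 1) ^ 2)
      = ((1 + x ^ 2 / (π ^ 2 * ((j : ℝ) + 1) ^ 2) : ℝ) : ℂ) := by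
    intro j
    have h1 : ((x / π : ℝ) * Complex.I) ^ 2 = -(((x / π) ^ 2 : ℝ) : ℂ) := by
      rw [mul_pow, Complex.I_sq]; push_cast; ring
    have h2 : ((j : ℂ) + 1) ^ 2 = ((((j : ℝ) + 1) ^ 2 : ℝ) : ℂ) := by push_cast; ring
    rw [h1, h2]
    rw [show (1 + x ^ 2 / (π ^ 2 * ((j : ℝ) + 1) ^ 2) : ℝ)
        = 1 + (x / π) ^ 2 / ((j : ℝ) + 1) ^ 2 by rw [div_pow, div_div]]
    push_cast
    ring
  have hre : ∀ n : ℕ, ((π : ℂ) * ((x / π : ℝ) * Complex.I) *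
      ∏ j ∈ Finset.range n, ((1 : ℂ) - ((x / π : ℝ) * Complex.I) ^ 2 / ((j : ℂ) + 1) ^ 2)).im
      = x * ∏ j ∈ Finset.range n, (1 + x ^ 2 / (π ^ 2 * ((j : ℝ) + 1) ^ 2)) := by
    intro n
    rw [hxi, Finset.prod_congr rfl (fun j _ => hfac j), ← Complex.ofReal_prod]
    rw [show (x : ℂ) * Complex.I * ((∏ j ∈ Finset.range n,
        (1 + x ^ 2 / (π ^ 2 * ((j : ℝ) + 1) ^ 2)) : ℝ) : ℂ)
      = (((x * ∏ j ∈ Finset.range n, (1 + x ^ 2 / (π ^ 2 * ((j : ℝ) + 1) ^ 2))) : ℝ) : ℂ)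
        * Complex.I by push_cast; ring]
    rw [Complex.mul_I_im, Complex.ofReal_re]
  have hsin : Complex.sin ((π : ℂ) * ((x / π : ℝ) * Complex.I)) = ((Real.sinh x : ℝ) : ℂ) * Complex.I := by
    rw [hxi, Complex.sin_mul_I, Complex.ofReal_sinh]
  have h2 := (Complex.continuous_im.tendsto _).comp h
  rw [hsin] at h2
  have him : (((Real.sinh x : ℝ) : ℂ) * Complex.I).im = Real.sinh x := by rw [Complex.mul_I_im, Complex.ofReal_re]
  rw [him] at h2
  exact h2.congr hre

lemma cosh_prod_tendsto {x : ℝ} (hx : 0 < x) :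
    Tendsto (fun n : ℕ => ∏ j ∈ Finset.range n, (1 + x ^ 2 / (π ^ 2 * ((j : ℝ) + 1 / 2) ^ 2)))
      atTop (𝓝 (Real.cosh x)) := by
  set g : ℕ → ℝ := fun j => 1 + x ^ 2 / (π ^ 2 * ((j : ℝ) + 1 / 2) ^ 2) with hg
  set h : ℕ → ℝ := fun j => 1 + x ^ 2 / (π ^ 2 * ((j : ℝ) + 1) ^ 2) with hh
  set f : ℕ → ℝ := fun j => 1 + (2 * x) ^ 2 / (π ^ 2 * ((j : ℝ) + 1) ^ 2) with hf
  have hπ : (0:ℝ) < π ^ 2 := by positivity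
  have hid : ∀ n : ℕ, ∏ j ∈ Finset.range (2 * n), f j
      = (∏ j ∈ Finset.range n, g j) * ∏ j ∈ Finset.range n, h j := by
    intro n
    induction n with
    | zero => simp
    | succ n ih =>
      have h2n : 2 * (n + 1) = (2 * n + 1) + 1 := by ring
      rw [h2n, Finset.prod_range_succ, Finset.prod_range_succ, ih,
        Finset.prod_range_succ, Finset.prod_range_succ]
      have hfg : f (2 * n) = g n := by
        have hden : π ^ 2 * (((2 * n : ℕ) : ℝ) + 1) ^ 2 = 4 * (π ^ 2 * (((n : ℕ) : ℝ) + 1 / 2) ^ 2) := by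
          push_cast; ring
        simp only [hf, hg, hden, show (2 * x) ^ 2 = 4 * x ^ 2 by ring,
          mul_div_mul_left _ _ (by norm_num : (4:ℝ) ≠ 0)]
      have hfh : f (2 * n + 1) = h n := by
        have hden : π ^ 2 * (((2 * n + 1 : ℕ) : ℝ) + 1) ^ 2 = 4 * (π ^ 2 * (((n : ℕ) : ℝ) + 1) ^ 2) := by
          push_cast; ring
        simp only [hf, hh, hden, show (2 * x) ^ 2 = 4 * x ^ 2 by ring,
          mul_div_mul_left _ _ (by norm_num : (4:ℝ) ≠ 0)]
      rw [hfg, hfh]; ring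
  have hA : Tendsto (fun n : ℕ => 2 * x * ∏ j ∈ Finset.range (2 * n), f j) atTop
      (𝓝 (Real.sinh (2 * x))) :=
    (sinh_prod_tendsto (2 * x)).comp (tendsto_id.const_mul_atTop' zero_lt_two)
  have hB : Tendsto (fun n : ℕ => x * ∏ j ∈ Finset.range n, h j) atTop (𝓝 (Real.sinh x)) :=
    sinh_prod_tendsto x
  have hsne : Real.sinh x ≠ 0 := (Real.sinh_pos_iff.mpr hx).ne'
  have hQ := hA.div hB hsne
  have hHpos : ∀ n : ℕ, 0 < ∏ j ∈ Finset.range n, h j := by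
    intro n
    apply Finset.prod_pos
    intro j _
    have : 0 ≤ x ^ 2 / (π ^ 2 * ((j : ℝ) + 1) ^ 2) := by positivity
    simp only [hh]; linarith
  have hpt : ∀ n : ℕ, (2 * x * ∏ j ∈ Finset.range (2 * n), f j)
      / (x * ∏ j ∈ Finset.range n, h j) = 2 * ∏ j ∈ Finset.range n, g j := by
    intro n
    rw [hid n]
    field_simp
    rw [mul_div_cancel_right₀ _ (hHpos n).ne']
  have hQ2 : Tendsto (fun n : ℕ => 2 * ∏ j ∈ Finset.range n, g j) atTop
      (𝓝 (Real.sinh (2 * x) / Real.sinh x)) := hQ.congr hpt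
  have hlim : Real.sinh (2 * x) / Real.sinh x = 2 * Real.cosh x := by
    rw [Real.sinh_two_mul]; field_simp
  rw [hlim] at hQ2
  have := hQ2.const_mul (2⁻¹ : ℝ)
  simp only [← mul_assoc, inv_mul_cancel₀ (two_ne_zero (α := ℝ)), one_mul] at this
  exact this

lemma expMeasure_one_eq : expMeasure 1
    = MeasureTheory.volume.withDensity fun x => ENNReal.ofReal (if 0 ≤ x then rexp (-x) else 0) := by
  unfold expMeasure gammaMeasure
  congr 1
  funext x
  rw [show gammaPDF 1 1 x = exponentialPDF 1 x from rfl, exponentialPDF_eq]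
  norm_num

lemma expMeasure_one_Iio : expMeasure 1 (Iio 0) = 0 := by
  rw [expMeasure_one_eq, withDensity_apply _ measurableSet_Iio]
  rw [setLIntegral_congr_fun measurableSet_Iio
    (fun x (hx : x < 0) => by
      rw [if_neg (not_le.mpr hx), ENNReal.ofReal_zero])]
  simp

lemma integral_expMeasure_exp {u : ℝ} (hu : u ≤ 0) :
    ∫ x, rexp (u * x) ∂(expMeasure 1) = (1 - u)⁻¹ := by
  have hmeasd : Measurable fun x : ℝ => (if 0 ≤ x then rexp (-x) else 0).toNNReal :=
    ((measurable_neg.exp).ite measurableSet_Ici measurable_const).real_toNNReal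
  rw [expMeasure_one_eq]
  rw [show (fun x => ENNReal.ofReal (if 0 ≤ x then rexp (-x) else 0))
      = fun x => ((if 0 ≤ x then rexp (-x) else 0).toNNReal : ℝ≥0∞) from rfl]
  rw [integral_withDensity_eq_integral_smul hmeasd]
  have hpt : ∀ x : ℝ, (if 0 ≤ x then rexp (-x) else 0).toNNReal • rexp (u * x)
      = Set.indicator (Ici 0) (fun x => rexp (-((1 - u) * x))) x := by
    intro x
    rw [NNReal.smul_def, smul_eq_mul, Real.coe_toNNReal']
    by_cases hx : 0 ≤ x
    · rw [if_pos hx, max_eq_left (exp_nonneg _), Set.indicator_of_mem (show x ∈ Ici 0 from hx), ← Real.exp_add]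
      ring_nf
    · rw [if_neg hx, Set.indicator_of_notMem (show x ∉ Ici 0 from hx), max_self, zero_mul]
  simp_rw [hpt]
  rw [integral_indicator measurableSet_Ici, integral_Ici_eq_integral_Ioi]
  have hb : (0:ℝ) < 1 - u := by linarith
  have := integral_comp_mul_left_Ioi (fun y => rexp (-y)) 0 hb
  simp only [mul_zero] at this
  rw [show (fun x : ℝ => rexp (-((1 - u) * x))) = fun x : ℝ => (fun y => rexp (-y)) ((1 - u) * x) from rfl]
  rw [this, integral_exp_neg_Ioi_zero, smul_eq_mul, mul_one]

lemma lintegral_expMeasure_id : ∫⁻ x, ENNReal.ofReal x ∂(expMeasure 1) < ⊤ := by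
  rw [expMeasure_one_eq]
  rw [lintegral_withDensity_eq_lintegral_mul _
    ((measurable_neg.exp).ite measurableSet_Ici measurable_const).ennreal_ofReal
    ENNReal.measurable_ofReal]
  simp only [Pi.mul_apply]
  have hpt : ∀ x : ℝ, ENNReal.ofReal (if 0 ≤ x then rexp (-x) else 0) * ENNReal.ofReal x
      = Set.indicator (Ici 0) (fun x => ENNReal.ofReal (rexp (-x) * x)) x := by
    intro x
    by_cases hx : 0 ≤ x
    · rw [if_pos hx, Set.indicator_of_mem (show x ∈ Ici 0 from hx), ENNReal.ofReal_mul (exp_nonneg _)]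
    · rw [if_neg hx, Set.indicator_of_notMem (show x ∉ Ici 0 from hx), ENNReal.ofReal_zero, zero_mul]
  simp_rw [hpt]
  rw [lintegral_indicator measurableSet_Ici]
  have hint : IntegrableOn (fun x => rexp (-x) * x) (Ici 0) := by
    rw [integrableOn_Ici_iff_integrableOn_Ioi]
    have := Real.GammaIntegral_convergent (s := 2) (by norm_num)
    refine this.congr_fun (fun x hx => ?_) measurableSet_Ioi
    norm_num
  exact lt_of_le_of_lt (lintegral_mono fun x => Real.ofReal_le_enorm _) hint.2


/-- The Jacobi (theta) distribution: if `(e k)_{k ≥ 0}` are i.i.d. rate-one exponential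
random variables (here `e k` plays the role of `e_{k+1}` in the series indexed from 1),
then the random series `J* = (2/π²) Σ_{k≥1} e_k/(k - 1/2)²` converges almost surely,
and for every `t ≥ 0` its Laplace transform is `E[exp(-t J*)] = 1/cosh √(2t)`. -/
theorem jacobi_laplace_transform
    {Ω : Type*} [MeasurableSpace Ω] (μ : Measure Ω) [IsProbabilityMeasure μ]
    (e : ℕ → Ω → ℝ)
    (hmeas : ∀ k, Measurable (e k))
    (hindep : iIndepFun e μ)
    (hdist : ∀ k, Measure.map (e k) μ = expMeasure 1) :
    (∀ᵐ ω ∂μ, Summable fun k : ℕ => e k ω / ((k : ℝ) + 1 - 1 / 2) ^ 2)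
    ∧ ∀ t : ℝ, 0 ≤ t →
        (∫ ω, Real.exp (-t * ((2 / π ^ 2) *
            ∑' k : ℕ, e k ω / ((k : ℝ) + 1 - 1 / 2) ^ 2)) ∂μ)
          = 1 / Real.cosh (Real.sqrt (2 * t)) := by
  have hπ : (π : ℝ) ≠ 0 := Real.pi_ne_zero
  set d : ℕ → ℝ := fun k => ((k : ℝ) + 1 - 1 / 2) ^ 2 with hdd
  have hd_pos : ∀ k, 0 < d k := by
    intro k
    have : d k = ((k : ℝ) + 1 / 2) ^ 2 := by rw [hdd]; ring
    rw [this]; positivity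
  -- a.s. nonnegativity
  have hnn_k : ∀ k, ∀ᵐ ω ∂μ, 0 ≤ e k ω := by
    intro k
    have h0 : μ (e k ⁻¹' Iio 0) = 0 := by
      rw [← Measure.map_apply (hmeas k) measurableSet_Iio, hdist k, expMeasure_one_Iio]
    have hset : {ω | ¬ 0 ≤ e k ω} = e k ⁻¹' Iio 0 := by ext ω; simp [not_le]
    rw [ae_iff, hset]; exact h0
  have hnn : ∀ᵐ ω ∂μ, ∀ k, 0 ≤ e k ω := ae_all_iff.mpr hnn_k
  -- summability of 1/d
  have hsum_d : Summable (fun k : ℕ => 1 / d k) := by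
    have hbase : Summable (fun n : ℕ => 1 / ((n : ℝ)) ^ 2) :=
      summable_one_div_nat_pow.mpr one_lt_two
    have h1 : Summable (fun k : ℕ => 1 / (((k : ℝ) + 1)) ^ 2) := by
      have := (summable_nat_add_iff 1).mpr hbase
      refine this.congr fun k => ?_
      push_cast; ring
    have h4 : Summable (fun k : ℕ => 4 * (1 / (((k : ℝ) + 1)) ^ 2)) := h1.mul_left 4
    refine Summable.of_nonneg_of_le (fun k => by positivity) (fun k => ?_) h4
    have hk : (0:ℝ) ≤ (k:ℝ) := Nat.cast_nonneg k
    have h2 : ((k:ℝ) + 1) ^ 2 ≤ 4 * d k := by rw [hdd]; nlinarith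
    rw [mul_one_div, div_le_div_iff₀ (hd_pos k) (by positivity), one_mul]
    linarith
  -- a.s. summability of the series
  have hsummable : ∀ᵐ ω ∂μ, Summable fun k : ℕ => e k ω / ((k : ℝ) + 1 - 1 / 2) ^ 2 := by
    have hlint : ∀ k, ∫⁻ ω, ENNReal.ofReal (e k ω / d k) ∂μ
        = (∫⁻ x, ENNReal.ofReal x ∂(expMeasure 1)) * ENNReal.ofReal (1 / d k) := by
      intro k
      have h1 : ∀ ω, ENNReal.ofReal (e k ω / d k)
          = ENNReal.ofReal (e k ω) * ENNReal.ofReal (1 / d k) := by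
        intro ω
        rw [div_eq_mul_one_div, ENNReal.ofReal_mul' (by positivity)]
      simp_rw [h1]
      rw [lintegral_mul_const _ ((hmeas k).ennreal_ofReal)]
      congr 1
      rw [← hdist k, lintegral_map ENNReal.measurable_ofReal (hmeas k)]
    have hC : ∫⁻ x, ENNReal.ofReal x ∂(expMeasure 1) ≠ ⊤ := lintegral_expMeasure_id.ne
    have hS : ∑' k : ℕ, ENNReal.ofReal (1 / d k) ≠ ⊤ := by
      rw [← ENNReal.ofReal_tsum_of_nonneg (fun k => by positivity) hsum_d]
      exact ENNReal.ofReal_ne_top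
    have hfin : ∫⁻ ω, ∑' k : ℕ, ENNReal.ofReal (e k ω / d k) ∂μ ≠ ⊤ := by
      rw [lintegral_tsum (fun k => (((hmeas k).div_const _).ennreal_ofReal).aemeasurable)]
      simp_rw [hlint]
      rw [ENNReal.tsum_mul_left]
      exact ENNReal.mul_ne_top hC hS
    have hae_fin : ∀ᵐ ω ∂μ, ∑' k : ℕ, ENNReal.ofReal (e k ω / d k) < ⊤ :=
      ae_lt_top (Measurable.ennreal_tsum fun k => ((hmeas k).div_const _).ennreal_ofReal) hfin
    filter_upwards [hnn, hae_fin] with ω h0 hfinω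
    have hsumm := ENNReal.summable_toReal hfinω.ne
    exact hsumm.congr fun k =>
      ENNReal.toReal_ofReal (div_nonneg (h0 k) (hd_pos k).le)
  refine ⟨hsummable, fun t ht => ?_⟩
  by_cases ht0 : t = 0
  · subst ht0; simp
  have ht' : 0 < t := lt_of_le_of_ne ht (Ne.symm ht0)
  set s : ℝ := -(t * (2 / π ^ 2)) with hs
  have hs_nonpos : s ≤ 0 := by
    rw [hs]
    have : (0:ℝ) ≤ t * (2 / π ^ 2) := by positivity
    linarith
  set X : ℕ → Ω → ℝ := fun k ω => e k ω / d k with hX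
  have hXmeas : ∀ k, Measurable (X k) := fun k => (hmeas k).div_const _
  have hindepX : iIndepFun X μ :=
    hindep.comp (fun k x => x / d k) (fun k => measurable_id.div_const _)
  -- mgf of each summand
  have hmgf : ∀ k, mgf (X k) μ s = (1 - s / d k)⁻¹ := by
    intro k
    rw [mgf]
    have h1 : (fun ω => rexp (s * X k ω)) = fun ω => rexp ((s / d k) * e k ω) := by
      funext ω
      rw [hX]
      congr 1
      field_simp
    rw [h1]
    have h2 : ∫ ω, rexp ((s / d k) * e k ω) ∂μ
        = ∫ x, rexp ((s / d k) * x) ∂(Measure.map (e k) μ) :=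
      (integral_map (hmeas k).aemeasurable
        ((measurable_id.const_mul (s / d k)).exp.aestronglyMeasurable)).symm
    rw [h2, hdist k, integral_expMeasure_exp
      (div_nonpos_of_nonpos_of_nonneg hs_nonpos (hd_pos k).le)]
  -- partial-sum integrals
  have hFn : ∀ n : ℕ, ∫ ω, rexp (s * ∑ i ∈ Finset.range n, X i ω) ∂μ
      = ∏ i ∈ Finset.range n, (1 - s / d i)⁻¹ := by
    intro n
    have h1 : ∫ ω, rexp (s * ∑ i ∈ Finset.range n, X i ω) ∂μ
        = mgf (∑ i ∈ Finset.range n, X i) μ s := by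
      rw [mgf]
      congr 1
      funext ω
      simp [Finset.sum_apply]
    rw [h1, hindepX.mgf_sum hXmeas]
    exact Finset.prod_congr rfl fun i _ => hmgf i
  -- dominated convergence
  have hTend : Tendsto (fun n => ∫ ω, rexp (s * ∑ i ∈ Finset.range n, X i ω) ∂μ) atTop
      (𝓝 (∫ ω, rexp (s * ∑' k : ℕ, X k ω) ∂μ)) := by
    apply tendsto_integral_of_dominated_convergence (bound := fun _ => (1:ℝ))
    · intro n
      exact (Real.measurable_exp.comp
        (((Finset.range n).measurable_sum fun i _ => hXmeas i).const_mul s)).aestronglyMeasurable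
    · exact integrable_const 1
    · intro n
      filter_upwards [hnn] with ω h0
      rw [Real.norm_eq_abs, Real.abs_exp]
      exact Real.exp_le_one_iff.mpr (mul_nonpos_iff.mpr (Or.inr ⟨hs_nonpos,
        Finset.sum_nonneg fun i _ => div_nonneg (h0 i) (hd_pos i).le⟩))
    · filter_upwards [hsummable] with ω hsω
      have hsum : Tendsto (fun n => ∑ i ∈ Finset.range n, X i ω) atTop (𝓝 (∑' k, X k ω)) :=
        hsω.hasSum.tendsto_sum_nat
      exact (Real.continuous_exp.tendsto _).comp (hsum.const_mul s)
  -- identify the integrand with the goal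
  have hintrw : (fun ω => rexp (-t * ((2 / π ^ 2) * ∑' k : ℕ, e k ω / ((k : ℝ) + 1 - 1 / 2) ^ 2)))
      = fun ω => rexp (s * ∑' k : ℕ, X k ω) := by
    funext ω
    congr 1
    rw [hs, hX]
    ring
  -- product limit
  set x : ℝ := Real.sqrt (2 * t) with hxdef
  have hxpos : 0 < x := Real.sqrt_pos.mpr (by linarith)
  have hx2 : x ^ 2 = 2 * t := Real.sq_sqrt (by linarith)
  have hfaceq : ∀ i : ℕ, (1 - s / d i)⁻¹ = (1 + x ^ 2 / (π ^ 2 * ((i : ℝ) + 1 / 2) ^ 2))⁻¹ := by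
    intro i
    congr 1
    rw [hx2, hs, hdd]
    have h5 : ((i:ℝ) + 1/2) ≠ 0 := by positivity
    have key : -(t * (2 / π ^ 2)) / ((i:ℝ) + 1 - 1/2)^2
        = -(2 * t / (π ^ 2 * ((i:ℝ) + 1/2)^2)) := by
      rw [show ((i:ℝ) + 1 - 1/2)^2 = ((i:ℝ) + 1/2)^2 by ring]
      field_simp
    rw [key]
    ring
  have hprodlim : Tendsto (fun n => ∏ i ∈ Finset.range n, (1 - s / d i)⁻¹) atTop
      (𝓝 (Real.cosh x)⁻¹) := by
    simp_rw [hfaceq, Finset.prod_inv_distrib]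
    exact (cosh_prod_tendsto hxpos).inv₀ (Real.cosh_pos x).ne'
  have hTend2 : Tendsto (fun n => ∏ i ∈ Finset.range n, (1 - s / d i)⁻¹) atTop
      (𝓝 (∫ ω, rexp (s * ∑' k : ℕ, X k ω) ∂μ)) := by
    refine hTend.congr hFn
  have := tendsto_nhds_unique hTend2 hprodlim
  rw [hintrw, this, one_div]
end

section
/- For every r > 0 and every s ∈ ℝ, log cosh(s) ≤ (tanh(r)/(2r))·s² + log cosh(r) − (r·tanh(r))/2, with equality if and only if |s| = r. -/
open Real


lemma hasDerivAt_tanh' (x : ℝ) : HasDerivAt Real.tanh ((Real.cosh x ^ 2)⁻¹) x := by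
  have h := (Real.hasDerivAt_sinh x).div (Real.hasDerivAt_cosh x) (Real.cosh_pos x).ne'
  have heq : (Real.cosh x * Real.cosh x - Real.sinh x * Real.sinh x) / Real.cosh x ^ 2
      = (Real.cosh x ^ 2)⁻¹ := by
    have := Real.cosh_sq_sub_sinh_sq x
    field_simp
    nlinarith [this]
  have hfun : (Real.sinh / Real.cosh) = Real.tanh := by
    funext y; exact (Real.tanh_eq_sinh_div_cosh y).symm
  rw [hfun, heq] at h
  exact h

lemma deriv_tanh' : deriv Real.tanh = fun x => (Real.cosh x ^ 2)⁻¹ :=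
  funext fun x => (hasDerivAt_tanh' x).deriv

lemma continuous_tanh' : Continuous Real.tanh := by
  have : Real.tanh = fun x => Real.sinh x / Real.cosh x := funext Real.tanh_eq_sinh_div_cosh
  rw [this]
  exact Real.continuous_sinh.div Real.continuous_cosh fun x => (Real.cosh_pos x).ne'

lemma tanh_strictConcave : StrictConcaveOn ℝ (Set.Ici (0:ℝ)) Real.tanh := by
  apply strictConcaveOn_of_deriv2_neg (convex_Ici 0) continuous_tanh'.continuousOn
  intro x hx
  rw [interior_Ici] at hx
  have hx' : 0 < x := hx
  have h2 : HasDerivAt (fun y => (Real.cosh y ^ 2)⁻¹)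
      (-(2 * Real.cosh x ^ 1 * Real.sinh x) / (Real.cosh x ^ 2) ^ 2) x :=
    (((Real.hasDerivAt_cosh x).pow 2)).inv (pow_pos (Real.cosh_pos x) 2).ne'
  have : deriv^[2] Real.tanh x = -(2 * Real.cosh x ^ 1 * Real.sinh x) / (Real.cosh x ^ 2) ^ 2 := by
    simp only [Function.iterate_succ, Function.iterate_zero, Function.comp_apply, id]
    rw [deriv_tanh']
    exact h2.deriv
  rw [this]
  have hs : 0 < Real.sinh x := Real.sinh_pos_iff.2 hx'
  have hc : 0 < Real.cosh x := Real.cosh_pos x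
  apply div_neg_of_neg_of_pos
  · nlinarith
  · positivity

lemma key_tanh {a b : ℝ} (ha : 0 < a) (hab : a < b) : a * Real.tanh b < b * Real.tanh a := by
  have hb : 0 < b := ha.trans hab
  have h := tanh_strictConcave.2 (Set.self_mem_Ici) (Set.mem_Ici.2 hb.le) hb.ne
    (show (0:ℝ) < 1 - a/b by rw [sub_pos]; exact (div_lt_one hb).2 hab)
    (show (0:ℝ) < a/b by positivity) (by ring)
  simp only [smul_eq_mul, Real.tanh_zero, mul_zero, zero_add, mul_zero] at h
  have hab' : a / b * b = a := by field_simp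
  rw [hab'] at h
  have := mul_lt_mul_of_pos_left h hb
  have h2 : b * (a / b * Real.tanh b) = a * Real.tanh b := by field_simp
  linarith [h2 ▸ this]

lemma F_pos {r : ℝ} (hr : 0 < r) {t : ℝ} (ht0 : 0 ≤ t) (htr : t ≠ r) :
    0 < (Real.tanh r / (2 * r)) * t ^ 2 + (Real.log (Real.cosh r) - r * Real.tanh r / 2)
        - Real.log (Real.cosh t) := by
  set c := Real.tanh r / (2 * r) with hc
  set K := Real.log (Real.cosh r) - r * Real.tanh r / 2 with hK
  set F : ℝ → ℝ := fun x => c * x ^ 2 + K - Real.log (Real.cosh x) with hF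
  have hF' : ∀ x, HasDerivAt F (c * (2 * x) - Real.tanh x) x := by
    intro x
    have h1 : HasDerivAt (fun y : ℝ => c * y ^ 2 + K) (c * (2 * x)) x := by
      have := ((hasDerivAt_pow 2 x).const_mul c).add_const K
      exact this.congr_deriv (by norm_num)
    have h2 : HasDerivAt (fun y : ℝ => Real.log (Real.cosh y)) (Real.tanh x) x := by
      have := (Real.hasDerivAt_cosh x).log (Real.cosh_pos x).ne'
      rwa [← Real.tanh_eq_sinh_div_cosh] at this
    exact h1.sub h2
  have hderiv : deriv F = fun x => c * (2 * x) - Real.tanh x := funext fun x => (hF' x).deriv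
  have hcont : Continuous F := by
    apply Continuous.sub
    · exact (continuous_const.mul (continuous_pow 2)).add continuous_const
    · exact Real.continuous_cosh.log fun x => (Real.cosh_pos x).ne'
  have hFr : F r = 0 := by
    simp only [hF, hc, hK]
    field_simp
    ring
  have hmono : StrictMonoOn F (Set.Ici r) := by
    apply strictMonoOn_of_deriv_pos (convex_Ici r) hcont.continuousOn
    intro x hx
    rw [interior_Ici, Set.mem_Ioi] at hx
    rw [hderiv]
    show 0 < c * (2 * x) - Real.tanh x
    have hkey := key_tanh hr hx
    have hx0 : 0 < x := hr.trans hx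
    have heq : c * (2 * x) = x * Real.tanh r / r := by rw [hc]; field_simp
    rw [heq, sub_pos, lt_div_iff₀ hr]
    linarith
  have hanti : StrictAntiOn F (Set.Icc 0 r) := by
    apply strictAntiOn_of_deriv_neg (convex_Icc 0 r) hcont.continuousOn
    intro x hx
    rw [interior_Icc, Set.mem_Ioo] at hx
    rw [hderiv]
    show c * (2 * x) - Real.tanh x < 0
    have hkey := key_tanh hx.1 hx.2
    have heq : c * (2 * x) = x * Real.tanh r / r := by rw [hc]; field_simp
    rw [heq, sub_neg, div_lt_iff₀ hr]
    linarith
  rcases lt_or_gt_of_ne htr with h | h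
  · have := hanti (Set.mem_Icc.2 ⟨ht0, h.le⟩) (Set.mem_Icc.2 ⟨hr.le, le_refl r⟩) h
    rw [hFr] at this
    simpa [hF] using this
  · have := hmono (Set.mem_Ici.2 (le_refl r)) (Set.mem_Ici.2 h.le) h
    rw [hFr] at this
    simpa [hF] using this

/-- Ono–Miyabe auxiliary-function (majorization) inequality for `log cosh`:
for every `r > 0` and every `s`,
`log cosh s ≤ (tanh r / (2r)) s² + log cosh r - r tanh r / 2`,
with equality if and only if `|s| = r`. -/
theorem logcosh_majorization (r : ℝ) (hr : 0 < r) (s : ℝ) :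
    Real.log (Real.cosh s)
      ≤ (Real.tanh r / (2 * r)) * s ^ 2 + Real.log (Real.cosh r) - r * Real.tanh r / 2
    ∧ (Real.log (Real.cosh s)
        = (Real.tanh r / (2 * r)) * s ^ 2 + Real.log (Real.cosh r) - r * Real.tanh r / 2
        ↔ |s| = r) := by
  have hcosh : Real.cosh s = Real.cosh |s| := (Real.cosh_abs s).symm
  have hsq : s ^ 2 = |s| ^ 2 := (sq_abs s).symm
  have habs : 0 ≤ |s| := abs_nonneg s
  by_cases h : |s| = r
  · constructor
    · rw [hcosh, hsq, h]
      have : Real.tanh r / (2 * r) * r ^ 2 = r * Real.tanh r / 2 := by field_simp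
      rw [this]
      ring_nf
      exact le_rfl
    · constructor
      · intro _; exact h
      · intro _
        rw [hcosh, hsq, h]
        have : Real.tanh r / (2 * r) * r ^ 2 = r * Real.tanh r / 2 := by field_simp
        rw [this]; ring
  · have hpos := F_pos hr habs h
    rw [← hsq, ← hcosh] at hpos
    constructor
    · linarith
    · constructor
      · intro heq; exfalso; linarith
      · intro h'; exact absurd h' h
end

section
/- For every ξ ∈ ℝ with ξ ≠ 0, define λ(ξ) = tanh(ξ/2)/(4ξ). Then for every x ∈ ℝ, log(1 + eˣ) ≤ λ(ξ)·(x² − ξ²) + (x − ξ)/2 + log(1 + e^ξ), with equality when x = ξ. -/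
open Real

lemma jj_L1 (v : ℝ) (hv : 0 < v) : Real.sinh v < v * Real.cosh v := by
  have h : StrictMonoOn (fun t => t * Real.cosh t - Real.sinh t) (Set.Ici (0:ℝ)) := by
    apply strictMonoOn_of_deriv_pos (convex_Ici 0)
    · fun_prop
    · intro t ht
      rw [interior_Ici] at ht
      have h1 : HasDerivAt (fun t => t * Real.cosh t - Real.sinh t) (t * Real.sinh t) t := by
        have := ((hasDerivAt_id t).mul (Real.hasDerivAt_cosh t)).sub (Real.hasDerivAt_sinh t)
        exact this.congr_deriv (by simp only [id]; ring)
      rw [h1.deriv]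
      exact mul_pos ht (Real.sinh_pos_iff.mpr ht)
  have := h (Set.self_mem_Ici) (Set.mem_Ici.mpr hv.le) hv
  simp only [Real.sinh_zero, Real.cosh_zero] at this
  linarith

-- sinh t / t strictly increasing on (0,∞): for 0 < v < u, v * sinh u > u * sinh v
lemma jj_L2 (v u : ℝ) (hv : 0 < v) (hvu : v < u) : u * Real.sinh v < v * Real.sinh u := by
  have h : StrictMonoOn (fun t => Real.sinh t / t) (Set.Ioi (0:ℝ)) := by
    apply strictMonoOn_of_deriv_pos (convex_Ioi 0)
    · apply ContinuousOn.div (by fun_prop) (by fun_prop)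
      intro t ht; exact ne_of_gt ht
    · intro t ht
      rw [interior_Ioi] at ht
      have h1 : HasDerivAt (fun t => Real.sinh t / t)
          ((Real.cosh t * t - Real.sinh t * 1) / t ^ 2) t :=
        (Real.hasDerivAt_sinh t).div (hasDerivAt_id t) (ne_of_gt ht)
      rw [h1.deriv]
      apply div_pos
      · have := jj_L1 t ht; nlinarith
      · exact pow_pos ht 2
  have := h (Set.mem_Ioi.mpr hv) (Set.mem_Ioi.mpr (hv.trans hvu)) hvu
  rw [div_lt_div_iff₀ hv (hv.trans hvu)] at this
  linarith

-- tanh s / s strictly decreasing: for 0 < s < b, s * tanh b < b * tanh s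
lemma jj_L3 (s b : ℝ) (hs : 0 < s) (hsb : s < b) : s * Real.tanh b < b * Real.tanh s := by
  have hb : 0 < b := hs.trans hsb
  have hcs := Real.cosh_pos (x := s)
  have hcb := Real.cosh_pos (x := b)
  rw [Real.tanh_eq_sinh_div_cosh, Real.tanh_eq_sinh_div_cosh,
    mul_div_assoc', mul_div_assoc', div_lt_div_iff₀ hcb hcs]
  have hL2 := jj_L2 (b - s) (s + b) (by linarith) (by linarith)
  have h1 : Real.sinh (s + b) = Real.sinh s * Real.cosh b + Real.cosh s * Real.sinh b :=
    Real.sinh_add s b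
  have h2 : Real.sinh (b - s) = Real.sinh b * Real.cosh s - Real.cosh b * Real.sinh s :=
    Real.sinh_sub b s
  nlinarith [hL2, h1, h2]

lemma jj_key (b t : ℝ) (hb : 0 < b) (ht : 0 ≤ t) :
    Real.log (Real.cosh t)
      ≤ Real.tanh b / (2 * b) * (t ^ 2 - b ^ 2) + Real.log (Real.cosh b) := by
  set lam := Real.tanh b / (2 * b) with hlam
  set G : ℝ → ℝ := fun s => lam * s ^ 2 - Real.log (Real.cosh s) with hGdef
  have hG : ∀ s : ℝ, HasDerivAt G (lam * (2 * s) - Real.tanh s) s := by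
    intro s
    have h1 : HasDerivAt (fun s : ℝ => lam * s ^ 2) (lam * (2 * s)) s := by
      have := (hasDerivAt_pow 2 s).const_mul lam
      exact this.congr_deriv (by norm_num)
    have h2 : HasDerivAt (fun s : ℝ => Real.log (Real.cosh s)) (Real.tanh s) s := by
      have := (Real.hasDerivAt_cosh s).log (ne_of_gt (Real.cosh_pos s))
      rw [Real.tanh_eq_sinh_div_cosh]
      exact this
    exact h1.sub h2
  have hdiff : Differentiable ℝ G := fun s => (hG s).differentiableAt
  have hGb : G b ≤ G t := by
    rcases le_or_gt t b with htb | hbt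
    · -- antitone on [0, b]
      have hanti : AntitoneOn G (Set.Icc 0 b) := by
        apply antitoneOn_of_deriv_nonpos (convex_Icc 0 b) hdiff.continuous.continuousOn
          (fun s _ => (hdiff s).differentiableWithinAt)
        intro s hs
        rw [interior_Icc] at hs
        rw [(hG s).deriv]
        have hL3 := jj_L3 s b hs.1 hs.2
        have hbne : (b : ℝ) ≠ 0 := ne_of_gt hb
        rw [hlam]
        rw [div_mul_eq_mul_div, sub_nonpos, div_le_iff₀ (by positivity)]
        nlinarith
      exact hanti (Set.mem_Icc.mpr ⟨ht, htb⟩) (Set.mem_Icc.mpr ⟨hb.le, le_refl b⟩) htb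
    · -- monotone on [b, ∞)
      have hmono : MonotoneOn G (Set.Ici b) := by
        apply monotoneOn_of_deriv_nonneg (convex_Ici b) hdiff.continuous.continuousOn
          (fun s _ => (hdiff s).differentiableWithinAt)
        intro s hs
        rw [interior_Ici] at hs
        rw [(hG s).deriv]
        have hL3 := jj_L3 b s hb hs
        rw [hlam, sub_nonneg, div_mul_eq_mul_div, le_div_iff₀ (by positivity)]
        nlinarith
      exact hmono (Set.mem_Ici.mpr (le_refl b)) (Set.mem_Ici.mpr hbt.le) hbt.le
  have hexp : lam * (t ^ 2 - b ^ 2) = lam * t ^ 2 - lam * b ^ 2 := by ring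
  simp only [hGdef] at hGb
  linarith

lemma jj_log_split (y : ℝ) :
    Real.log (1 + Real.exp y) = y / 2 + Real.log 2 + Real.log (Real.cosh (|y| / 2)) := by
  have habs : Real.cosh (|y| / 2) = Real.cosh (y / 2) := by
    rw [show |y| / 2 = |y / 2| by rw [abs_div]; norm_num, Real.cosh_abs]
  rw [habs]
  have hprod : (1 : ℝ) + Real.exp y = Real.exp (y / 2) * (2 * Real.cosh (y / 2)) := by
    rw [Real.cosh_eq]
    have h1 : Real.exp (y / 2) * Real.exp (y / 2) = Real.exp y := by
      rw [← Real.exp_add]; norm_num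
    have h2 : Real.exp (y / 2) * Real.exp (-y / 2) = 1 := by
      rw [← Real.exp_add, show y / 2 + -y / 2 = 0 by ring, Real.exp_zero]
    field_simp
    rw [neg_div] at h2; nlinarith [h1, h2]
  rw [hprod, Real.log_mul (Real.exp_ne_zero _) (by positivity), Real.log_exp,
    Real.log_mul (by norm_num) (ne_of_gt (Real.cosh_pos _))]
  ring

/-- Jaakkola–Jordan tight quadratic bound for the logistic log-partition function:
for `ξ ≠ 0` and `λ(ξ) = tanh(ξ/2)/(4ξ)`, every real `x` satisfies
`log(1 + eˣ) ≤ λ(ξ)(x² - ξ²) + (x - ξ)/2 + log(1 + e^ξ)`, with equality at `x = ξ`. -/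
theorem jaakkola_jordan_bound (ξ : ℝ) (hξ : ξ ≠ 0) :
    (∀ x : ℝ,
      Real.log (1 + Real.exp x)
        ≤ (Real.tanh (ξ / 2) / (4 * ξ)) * (x ^ 2 - ξ ^ 2) + (x - ξ) / 2
            + Real.log (1 + Real.exp ξ))
    ∧ Real.log (1 + Real.exp ξ)
        = (Real.tanh (ξ / 2) / (4 * ξ)) * (ξ ^ 2 - ξ ^ 2) + (ξ - ξ) / 2
            + Real.log (1 + Real.exp ξ) := by
  constructor
  · intro x
    have hb : 0 < |ξ| / 2 := by
      have := abs_pos.mpr hξ; linarith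
    have ht : 0 ≤ |x| / 2 := by positivity
    have hkey := jj_key (|ξ| / 2) (|x| / 2) hb ht
    have hx := jj_log_split x
    have hxi := jj_log_split ξ
    have hco : Real.tanh (ξ / 2) / (4 * ξ) * (x ^ 2 - ξ ^ 2)
        = Real.tanh (|ξ| / 2) / (2 * (|ξ| / 2)) * ((|x| / 2) ^ 2 - (|ξ| / 2) ^ 2) := by
      have hx2 : (|x| / 2) ^ 2 = x ^ 2 / 4 := by rw [div_pow, sq_abs]; norm_num
      have hxi2 : (|ξ| / 2) ^ 2 = ξ ^ 2 / 4 := by rw [div_pow, sq_abs]; norm_num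
      rw [hx2, hxi2]
      rcases lt_or_gt_of_ne hξ with hneg | hpos
      · rw [abs_of_neg hneg, show -ξ / 2 = -(ξ / 2) by ring, Real.tanh_neg,
          show (2:ℝ) * -(ξ / 2) = -ξ by ring]
        rw [div_mul_eq_mul_div, div_mul_eq_mul_div,
          div_eq_div_iff (by simp [hξ]) (by simpa using hξ)]
        ring
      · rw [abs_of_pos hpos, show (2:ℝ) * (ξ / 2) = ξ by ring]
        rw [div_mul_eq_mul_div, div_mul_eq_mul_div,
          div_eq_div_iff (by positivity) hξ]
        ring
    rw [hx, hxi, hco]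
    linarith [hkey]
  · ring
end

section
/- For every n ≥ 1, every x₁, …, x_n ∈ ℝ, and every α ∈ ℝ, log(Σ_{i=1}^n e^{x_i}) ≤ α + Σ_{i=1}^n log(1 + e^{x_i − α}). -/
open Real Finset

lemma sum_le_prod_one_add {ι : Type*} [DecidableEq ι] (s : Finset ι) (y : ι → ℝ)
    (hy : ∀ i ∈ s, 0 ≤ y i) : ∑ i ∈ s, y i ≤ ∏ i ∈ s, (1 + y i) := by
  induction s using Finset.induction_on with
  | empty => simp
  | insert a s ha ih =>
    rw [Finset.sum_insert ha, Finset.prod_insert ha]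
    have h1 : (1:ℝ) ≤ ∏ i ∈ s, (1 + y i) := by
      calc (1:ℝ) = ∏ _i ∈ s, (1:ℝ) := by simp
        _ ≤ _ := Finset.prod_le_prod (fun i _ => zero_le_one)
            (fun i hi => le_add_of_nonneg_right (hy i (Finset.mem_insert_of_mem hi)))
    have h2 := ih fun i hi => hy i (Finset.mem_insert_of_mem hi)
    have h3 : 0 ≤ y a := hy a (Finset.mem_insert_self a s)
    nlinarith

/-- Bouchard's first bound for log-sum-exp: for every `n ≥ 1`, reals `x₁,…,xₙ` and
every `α`, `log (Σ_i e^{x_i}) ≤ α + Σ_i log (1 + e^{x_i - α})`. -/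
theorem bouchard_logsumexp_bound (n : ℕ) (hn : 1 ≤ n) (x : Fin n → ℝ) (α : ℝ) :
    Real.log (∑ i, Real.exp (x i)) ≤ α + ∑ i, Real.log (1 + Real.exp (x i - α)) := by
  have hpos : ∀ i : Fin n, 0 < 1 + Real.exp (x i - α) := fun i => by positivity
  have hlog : ∑ i, Real.log (1 + Real.exp (x i - α)) =
      Real.log (∏ i, (1 + Real.exp (x i - α))) :=
    (Real.log_prod fun i _ => (hpos i).ne').symm
  rw [hlog]
  have hsum : (∑ i, Real.exp (x i)) = Real.exp α * ∑ i, Real.exp (x i - α) := by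
    rw [Finset.mul_sum]
    congr 1; ext i; rw [← Real.exp_add]; ring_nf
  rw [hsum, Real.log_mul (Real.exp_ne_zero _) ?_, Real.log_exp]
  · have hsp : 0 < ∑ i, Real.exp (x i - α) :=
      Finset.sum_pos (fun i _ => Real.exp_pos _) (Finset.univ_nonempty_iff.mpr ⟨⟨0, hn⟩⟩)
    have := Real.log_le_log hsp (sum_le_prod_one_add _ _ fun i _ => (Real.exp_pos _).le)
    linarith
  · exact (Finset.sum_pos (fun i _ => Real.exp_pos _)
      (Finset.univ_nonempty_iff.mpr ⟨⟨0, hn⟩⟩)).ne'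
end
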